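/- arXiv:2505.13779 — 2 statements merged into one kernel-verified Lean document; each statement's English description precedes it below -/
import Mathlib

section
/- For every v ∈ V there exist an integer m with 0 ≤ m ≤ n, a partition λ of n − m, and an element g ∈ G such that g·Stab_G(v)·g⁻¹ = H(m,λ); conversely, every subgroup H(m,λ) with m + |λ| = n is the stabilizer in G of some point of V. -/
open Matrix

namespace WreathCM

/-- The permutation action of `Perm (Fin n)` on `Fin n → Γ` by permuting coordinates,
as a homomorphism to the automorphism group. -/
def wreathφ (n : ℕ) (Γ : Type*) [Group Γ] :
    Equiv.Perm (Fin n) →* MulAut (Fin n → Γ) where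
  toFun σ := MulEquiv.arrowCongr σ (MulEquiv.refl Γ)
  map_one' := by ext γ i; rfl
  map_mul' σ τ := by ext γ i; rfl

/-- The wreath product `G = (Fin n → Γ) ⋊ Perm (Fin n) = Γ ≀ S_n`. -/
abbrev G (n : ℕ) (Γ : Type*) [Group Γ] :=
  SemidirectProduct (Fin n → Γ) (Equiv.Perm (Fin n)) (wreathφ n Γ)

/-- The action of `G` on `V = Fin n → ℂ²`: `((γ,σ)·v)(i) = γ(i)·v(σ⁻¹(i))`,
where `Γ ≤ SL(2,ℂ)` acts on `ℂ²` by matrix multiplication. -/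
noncomputable def act (n : ℕ) (Γ : Subgroup (SpecialLinearGroup (Fin 2) ℂ))
    (g : G n Γ) (v : Fin n → Fin 2 → ℂ) : Fin n → Fin 2 → ℂ :=
  fun i => ((g.left i : SpecialLinearGroup (Fin 2) ℂ) : Matrix (Fin 2) (Fin 2) ℂ).mulVec
    (v (g.right⁻¹ i))

/-- The stabilizer (as a set) of `v ∈ V` in `G`. -/
noncomputable def stabSet (n : ℕ) (Γ : Subgroup (SpecialLinearGroup (Fin 2) ℂ))
    (v : Fin n → Fin 2 → ℂ) : Set (G n Γ) :=
  {g | act n Γ g v = v}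

/-- The blocks `B_0, B_1, …, B_k` of `{0,…,n−1}`: `B_0 = {0,…,m−1}`, and `B_1,…,B_k` are
the subsequent consecutive blocks of sizes `λ_1,…,λ_k`. -/
def block (n m : ℕ) (lam : List ℕ) (t : ℕ) : Set (Fin n) :=
  if t = 0 then {i | (i : ℕ) < m}
  else {i | m + (lam.take (t - 1)).sum ≤ (i : ℕ) ∧ (i : ℕ) < m + (lam.take t).sum}

lemma mem_block_zero (n m : ℕ) (lam : List ℕ) (x : Fin n) :
    x ∈ block n m lam 0 ↔ (x : ℕ) < m := by
  simp [block]

/-- The subgroup `H(m,λ) ≤ G` of all `(γ,σ)` such that `σ(B_t) = B_t` for every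
`0 ≤ t ≤ k` and `γ(i) = 1` for all `i ≥ m`. -/
noncomputable def H (n : ℕ) (Γ : Subgroup (SpecialLinearGroup (Fin 2) ℂ))
    (m : ℕ) (lam : List ℕ) : Subgroup (G n Γ) where
  carrier := {g | (∀ t ≤ lam.length, ⇑g.right '' block n m lam t = block n m lam t) ∧
    ∀ i : Fin n, m ≤ (i : ℕ) → g.left i = 1}
  one_mem' := by
    refine ⟨fun t _ => ?_, fun i _ => rfl⟩
    simp
  mul_mem' := by
    rintro a b ⟨ha1, ha2⟩ ⟨hb1, hb2⟩
    refine ⟨fun t ht => ?_, fun i hi => ?_⟩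
    · rw [SemidirectProduct.mul_right, Equiv.Perm.coe_mul, Set.image_comp,
        hb1 t ht, ha1 t ht]
    · rw [SemidirectProduct.mul_left]
      have h2 : b.left (a.right⁻¹ i) = 1 := by
        apply hb2
        by_contra hlt
        push_neg at hlt
        have hmem : (a.right⁻¹ i : Fin n) ∈ block n m lam 0 :=
          (mem_block_zero n m lam _).mpr hlt
        have him : i ∈ block n m lam 0 := by
          rw [← ha1 0 (Nat.zero_le _)]
          exact ⟨a.right⁻¹ i, hmem, by simp⟩
        have := (mem_block_zero n m lam i).mp him
        omega
      have hval : (a.left * (wreathφ n Γ) a.right b.left) i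
          = a.left i * b.left (a.right⁻¹ i) := rfl
      rw [hval, ha2 i hi, h2, one_mul]
  inv_mem' := by
    rintro a ⟨ha1, ha2⟩
    refine ⟨fun t ht => ?_, fun i hi => ?_⟩
    · rw [SemidirectProduct.inv_right]
      have h := ha1 t ht
      calc ⇑a.right⁻¹ '' block n m lam t
          = ⇑a.right⁻¹ '' (⇑a.right '' block n m lam t) := by rw [h]
        _ = block n m lam t := by
            ext x
            simp [Set.mem_image]
    · have hle : m ≤ ((a.right i : Fin n) : ℕ) := by
        by_contra hlt
        push_neg at hlt
        have hmem : (a.right i : Fin n) ∈ block n m lam 0 :=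
          (mem_block_zero n m lam _).mpr hlt
        rw [← ha1 0 (Nat.zero_le _)] at hmem
        obtain ⟨x, hx, hxe⟩ := hmem
        have hxi : x = i := a.right.injective hxe
        subst hxi
        have := (mem_block_zero n m lam x).mp hx
        omega
      have hval : (a⁻¹).left i = (a.left (a.right i))⁻¹ := rfl
      rw [hval, ha2 _ hle, inv_one]



abbrev SL2 := Matrix.SpecialLinearGroup (Fin 2) ℂ

noncomputable def mv (γ : SL2) (w : Fin 2 → ℂ) : Fin 2 → ℂ :=
  (γ : Matrix (Fin 2) (Fin 2) ℂ).mulVec w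

lemma mv_mul (γ δ : SL2) (w : Fin 2 → ℂ) : mv (γ * δ) w = mv γ (mv δ w) := by
  unfold mv; rw [Matrix.SpecialLinearGroup.coe_mul, Matrix.mulVec_mulVec]

lemma mv_one (w : Fin 2 → ℂ) : mv 1 w = w := by
  simp [mv]

lemma mv_zero (γ : SL2) : mv γ 0 = 0 := by simp [mv]

lemma mv_eq_zero {γ : SL2} {w : Fin 2 → ℂ} (h : mv γ w = 0) : w = 0 := by
  have : mv γ⁻¹ (mv γ w) = mv γ⁻¹ 0 := by rw [h]
  rwa [← mv_mul, inv_mul_cancel, mv_one, mv_zero] at this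

lemma sq_zero_pow {M : Matrix (Fin 2) (Fin 2) ℂ} (h : M * M = 0) (j : ℕ) :
    (1 + M) ^ j = 1 + j • M := by
  induction j with
  | zero => simp
  | succ j ih =>
    rw [pow_succ, ih, add_smul, one_smul]
    have : (j • M) * M = j • (M * M) := smul_mul_assoc j M M
    rw [mul_add, mul_one, add_mul, one_mul, this, h, smul_zero, add_zero]
    abel

lemma fix_triv (Γ : Subgroup SL2) [Finite Γ] (γ : Γ) (w : Fin 2 → ℂ)
    (hw : w ≠ 0) (hfix : mv (γ : SL2) w = w) : (γ : SL2) = 1 := by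
  set A : Matrix (Fin 2) (Fin 2) ℂ := ((γ : SL2) : Matrix (Fin 2) (Fin 2) ℂ) with hA
  have hdet : A.det = 1 := (γ : SL2).2
  have hN : (γ : SL2) ^ (orderOf γ) = 1 := by
    rw [← Subgroup.coe_pow, pow_orderOf_eq_one, Subgroup.coe_one]
  have hNpos : 0 < orderOf γ := orderOf_pos γ
  have hApow : A ^ (orderOf γ) = 1 := by
    rw [hA, ← Matrix.SpecialLinearGroup.coe_pow, hN]; rfl
  -- (A - 1) w = 0
  have hker : (A - 1) *ᵥ w = 0 := by
    rw [Matrix.sub_mulVec, Matrix.one_mulVec]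
    have : A *ᵥ w = w := hfix
    rw [this, sub_self]
  have hdet0 : (A - 1).det = 0 := by
    rw [← Matrix.exists_mulVec_eq_zero_iff]
    exact ⟨w, hw, hker⟩
  have h1 : A 0 0 * A 1 1 - A 0 1 * A 1 0 = 1 := by
    rw [← Matrix.det_fin_two]; exact hdet
  have h2 : A 0 0 + A 1 1 = 2 := by
    rw [Matrix.det_fin_two] at hdet0
    simp only [Matrix.sub_apply, Matrix.one_apply_eq, Matrix.one_apply_ne (by decide : (0:Fin 2) ≠ 1), Matrix.one_apply_ne (by decide : (1:Fin 2) ≠ 0)] at hdet0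
    linear_combination -hdet0 + h1
  have hM2 : (A - 1) * (A - 1) = 0 := by
    ext i j
    rw [Matrix.mul_apply, Fin.sum_univ_two, Matrix.zero_apply]
    fin_cases i <;> fin_cases j <;>
      simp only [Matrix.sub_apply, Matrix.one_apply, if_true, if_pos, Fin.isValue,
        reduceIte, Fin.mk_one, Fin.zero_eta, eq_self_iff_true, one_ne_zero, zero_ne_one]
    · linear_combination -h1 + A 0 0 * h2
    · linear_combination A 0 1 * h2
    · linear_combination A 1 0 * h2
    · linear_combination -h1 + A 1 1 * h2
  have hpow := sq_zero_pow hM2 (orderOf γ)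
  rw [add_sub_cancel] at hpow
  rw [hApow] at hpow
  have hsmul : (orderOf γ) • (A - 1) = 0 := by
    have := hpow.symm
    rwa [add_eq_left] at this
  have hA1 : A - 1 = 0 := by
    have h := hsmul
    rw [← Nat.cast_smul_eq_nsmul ℂ] at h
    rcases smul_eq_zero.mp h with h' | h'
    · exact absurd h' (Nat.cast_ne_zero.mpr hNpos.ne')
    · exact h'
  have : A = 1 := by rwa [sub_eq_zero] at hA1
  exact Subtype.ext this



def bIdx : List ℕ → ℕ → ℕ
  | [], _ => 0
  | a :: l, j => if j < a then 0 else bIdx l (j - a) + 1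

lemma bIdx_spec : ∀ (lam : List ℕ) (j : ℕ), j < lam.sum →
    (lam.take (bIdx lam j)).sum ≤ j ∧ j < (lam.take (bIdx lam j + 1)).sum ∧
      bIdx lam j < lam.length := by
  intro lam
  induction lam with
  | nil => intro j hj; simp at hj
  | cons a l ih =>
    intro j hj
    by_cases h : j < a
    · simp [bIdx, h]
    · have ha : a ≤ j := Nat.le_of_not_lt h
      have hj' : j - a < l.sum := by
        simp only [List.sum_cons] at hj; omega
      obtain ⟨h1, h2, h3⟩ := ih (j - a) hj'
      refine ⟨?_, ?_, ?_⟩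
      · simp only [bIdx, if_neg h, List.take_succ_cons, List.sum_cons]; omega
      · simp only [bIdx, if_neg h, List.take_succ_cons, List.sum_cons]; omega
      · simp only [bIdx, if_neg h, List.length_cons]; omega

lemma bIdx_unique : ∀ (lam : List ℕ) (j t : ℕ), t < lam.length →
    (lam.take t).sum ≤ j → j < (lam.take (t + 1)).sum → bIdx lam j = t := by
  intro lam
  induction lam with
  | nil => intro j t ht; simp at ht
  | cons a l ih =>
    intro j t ht h1 h2
    cases t with
    | zero =>
      simp only [List.take_succ_cons, List.take_zero, List.sum_cons, List.sum_nil,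
        add_zero] at h2
      simp [bIdx, h2]
    | succ s =>
      simp only [List.take_succ_cons, List.sum_cons] at h1 h2
      have ha : a ≤ j := le_trans (Nat.le_add_right _ _) h1
      simp only [List.length_cons] at ht
      have := ih (j - a) s (by omega) (by omega) (by omega)
      simp [bIdx, Nat.not_lt.mpr ha, this]


lemma mem_block_pos (n m : ℕ) (lam : List ℕ) {t : ℕ} (ht : t ≠ 0) (x : Fin n) :
    x ∈ block n m lam t ↔
      m + (lam.take (t - 1)).sum ≤ (x : ℕ) ∧ (x : ℕ) < m + (lam.take t).sum := by
  simp [block, ht]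

lemma mem_H_iff (n : ℕ) (Γ : Subgroup (SpecialLinearGroup (Fin 2) ℂ)) (m : ℕ)
    (lam : List ℕ) (g : G n Γ) :
    g ∈ H n Γ m lam ↔ (∀ t ≤ lam.length, ⇑g.right '' block n m lam t = block n m lam t) ∧
      ∀ i : Fin n, m ≤ (i : ℕ) → g.left i = 1 := Iff.rfl

lemma mem_stabSet_iff (n : ℕ) (Γ : Subgroup (SpecialLinearGroup (Fin 2) ℂ))
    (v : Fin n → Fin 2 → ℂ) (g : G n Γ) :
    g ∈ stabSet n Γ v ↔ ∀ i, mv (g.left i : SL2) (v (g.right⁻¹ i)) = v i := by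
  constructor
  · intro h i; exact congrFun h i
  · intro h; funext i; exact h i

lemma block_mem_iff {n m : ℕ} {lam : List ℕ} (hsum : m + lam.sum = n)
    {i : Fin n} (hm : m ≤ (i : ℕ)) {t : ℕ} (ht1 : 1 ≤ t) (ht2 : t ≤ lam.length) :
    i ∈ block n m lam t ↔ bIdx lam ((i : ℕ) - m) = t - 1 := by
  have hj : (i : ℕ) - m < lam.sum := by have := i.2; omega
  rw [mem_block_pos n m lam (by omega) i]
  constructor
  · rintro ⟨h1, h2⟩
    apply bIdx_unique lam ((i : ℕ) - m) (t - 1) (by omega) (by omega)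
    have : t - 1 + 1 = t := by omega
    rw [this]; omega
  · intro hb
    obtain ⟨h1, h2, h3⟩ := bIdx_spec lam ((i : ℕ) - m) hj
    rw [hb] at h1 h2
    have : t - 1 + 1 = t := by omega
    rw [this] at h2
    omega

lemma perm_image_eq {α : Type*} {σ : Equiv.Perm α} {B : Set α}
    (h1 : ∀ i ∈ B, σ⁻¹ i ∈ B) (h2 : ∀ i ∈ B, σ i ∈ B) : ⇑σ '' B = B := by
  apply Set.eq_of_subset_of_subset
  · rintro x ⟨y, hy, rfl⟩; exact h2 y hy
  · intro x hx
    exact ⟨σ⁻¹ x, h1 x hx, σ.apply_symm_apply x⟩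

lemma perm_inv_mem {α : Type*} {σ : Equiv.Perm α} {B : Set α}
    (h : ⇑σ '' B = B) {i : α} (hi : i ∈ B) : σ⁻¹ i ∈ B := by
  rw [← h] at hi
  obtain ⟨x, hx, rfl⟩ := hi
  simpa using hx

noncomputable def canon (n m : ℕ) (lam : List ℕ) (w : ℕ → Fin 2 → ℂ) :
    Fin n → Fin 2 → ℂ :=
  fun i => if (i : ℕ) < m then 0 else w (bIdx lam ((i : ℕ) - m))

lemma stab_eq (n m : ℕ) (lam : List ℕ) (Γ : Subgroup SL2) [Finite Γ]
    (hsum : m + lam.sum = n) (w : ℕ → Fin 2 → ℂ)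
    (hw0 : ∀ t < lam.length, w t ≠ 0)
    (hworb : ∀ s t, s < lam.length → t < lam.length →
      (∃ γ : Γ, mv (γ : SL2) (w s) = w t) → s = t) :
    stabSet n Γ (canon n m lam w) = (H n Γ m lam : Set (G n Γ)) := by
  set v := canon n m lam w with hv
  have hvlt : ∀ i : Fin n, (i : ℕ) < m → v i = 0 := fun i h => by simp [hv, canon, h]
  have hvge : ∀ i : Fin n, m ≤ (i : ℕ) → v i = w (bIdx lam ((i : ℕ) - m)) :=
    fun i h => by simp [hv, canon, Nat.not_lt.mpr h]
  have hble : ∀ i : Fin n, m ≤ (i : ℕ) → bIdx lam ((i : ℕ) - m) < lam.length := by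
    intro i h
    exact (bIdx_spec lam _ (by have := i.2; omega)).2.2
  have hv0 : ∀ i : Fin n, v i = 0 ↔ (i : ℕ) < m := by
    intro i
    constructor
    · intro h
      by_contra hm
      push_neg at hm
      rw [hvge i hm] at h
      exact hw0 _ (hble i hm) h
    · exact hvlt i
  ext g
  rw [mem_stabSet_iff, SetLike.mem_coe, mem_H_iff]
  constructor
  · intro hg
    -- step1 : σ⁻¹ preserves < m
    have step1 : ∀ i : Fin n, ((g.right⁻¹ i : Fin n) : ℕ) < m ↔ (i : ℕ) < m := by
      intro i
      rw [← hv0, ← hv0]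
      constructor
      · intro h
        rw [← hg i, h, mv_zero]
      · intro h
        have := hg i
        rw [h] at this
        exact mv_eq_zero this
    have step2 : ∀ i : Fin n, m ≤ (i : ℕ) →
        bIdx lam (((g.right⁻¹ i : Fin n) : ℕ) - m) = bIdx lam ((i : ℕ) - m) ∧
          g.left i = 1 := by
      intro i hm
      have hm' : m ≤ ((g.right⁻¹ i : Fin n) : ℕ) := by
        by_contra h
        push_neg at h
        exact absurd ((step1 i).mp h) (Nat.not_lt.mpr hm)
      have heq := hg i
      rw [hvge _ hm', hvge _ hm] at heq
      have hbb := hworb _ _ (hble _ hm') (hble _ hm) ⟨g.left i, heq⟩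
      refine ⟨hbb, ?_⟩
      rw [hbb] at heq
      have := fix_triv Γ (g.left i) _ (hw0 _ (hble _ hm)) heq
      exact OneMemClass.coe_eq_one.mp this
    refine ⟨?_, fun i hi => (step2 i hi).2⟩
    intro t ht
    rcases Nat.eq_zero_or_pos t with rfl | htpos
    · apply perm_image_eq
      · intro i hi
        rw [mem_block_zero] at hi ⊢
        exact (step1 i).mpr hi
      · intro i hi
        rw [mem_block_zero] at hi ⊢
        rw [← step1 (g.right i)]
        simpa using hi
    · apply perm_image_eq
      · intro i hi
        have hm : m ≤ (i : ℕ) := by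
          rw [mem_block_pos n m lam (by omega) i] at hi
          omega
        rw [block_mem_iff hsum hm htpos ht] at hi
        have hm' : m ≤ ((g.right⁻¹ i : Fin n) : ℕ) := by
          by_contra h
          push_neg at h
          exact absurd ((step1 i).mp h) (Nat.not_lt.mpr hm)
        rw [block_mem_iff hsum hm' htpos ht, (step2 i hm).1, hi]
      · intro i hi
        have hm : m ≤ (i : ℕ) := by
          rw [mem_block_pos n m lam (by omega) i] at hi
          omega
        rw [block_mem_iff hsum hm htpos ht] at hi
        have hmgi : m ≤ ((g.right i : Fin n) : ℕ) := by
          by_contra h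
          push_neg at h
          have := (step1 (g.right i)).mpr h
          simp only [Equiv.Perm.inv_def, Equiv.symm_apply_apply] at this
          omega
        rw [block_mem_iff hsum hmgi htpos ht]
        have := (step2 (g.right i) hmgi).1
        simp only [Equiv.Perm.inv_def, Equiv.symm_apply_apply] at this
        rw [← this, hi]
  · rintro ⟨h1, h2⟩ 
    intro i
    rcases Nat.lt_or_ge (i : ℕ) m with him | him
    · have hib : i ∈ block n m lam 0 := (mem_block_zero n m lam i).mpr him
      have := perm_inv_mem (h1 0 (Nat.zero_le _)) hib
      rw [mem_block_zero] at this
      rw [hvlt _ this, mv_zero, hvlt _ him]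
    · set b := bIdx lam ((i : ℕ) - m) with hb
      have hbl : b < lam.length := hble i him
      have hib : i ∈ block n m lam (b + 1) := by
        rw [block_mem_iff hsum him (by omega) (by omega)]
        simp [hb]
      have hinv := perm_inv_mem (h1 (b + 1) (by omega)) hib
      have hm' : m ≤ ((g.right⁻¹ i : Fin n) : ℕ) := by
        rw [mem_block_pos n m lam (by omega)] at hinv
        omega
      rw [block_mem_iff hsum hm' (by omega) (by omega)] at hinv
      simp only [Nat.add_sub_cancel] at hinv
      rw [hvge _ hm', hinv, h2 i him, hvge _ him, ← hb]
      have : ((1 : Γ) : SL2) = 1 := rfl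
      rw [this, mv_one]


noncomputable def badSet (Γ : Subgroup SL2) [Finite Γ] (prev : List (Fin 2 → ℂ)) :
    Set (Fin 2 → ℂ) :=
  {0} ∪ ⋃ x ∈ prev, Set.range (fun γ : Γ => mv (γ : SL2) x)

lemma badSet_finite (Γ : Subgroup SL2) [Finite Γ] (prev : List (Fin 2 → ℂ)) :
    (badSet Γ prev).Finite := by
  apply Set.Finite.union (Set.finite_singleton 0)
  apply Set.Finite.biUnion prev.finite_toSet
  intro x _
  exact Set.finite_range _

noncomputable def pick (Γ : Subgroup SL2) [Finite Γ] (prev : List (Fin 2 → ℂ)) :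
    Fin 2 → ℂ :=
  ((badSet_finite Γ prev).infinite_compl).nonempty.choose

lemma pick_spec (Γ : Subgroup SL2) [Finite Γ] (prev : List (Fin 2 → ℂ)) :
    pick Γ prev ∉ badSet Γ prev :=
  ((badSet_finite Γ prev).infinite_compl).nonempty.choose_spec

noncomputable def W (Γ : Subgroup SL2) [Finite Γ] : ℕ → Fin 2 → ℂ :=
  fun t => pick Γ (List.ofFn (fun s : Fin t => W Γ s))
  termination_by t => t
  decreasing_by exact s.2

lemma W_ne_zero (Γ : Subgroup SL2) [Finite Γ] (t : ℕ) : W Γ t ≠ 0 := by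
  intro h
  have := pick_spec Γ (List.ofFn (fun s : Fin t => W Γ s))
  rw [← W] at this
  exact this (Or.inl h)

lemma W_not_orbit (Γ : Subgroup SL2) [Finite Γ] {s t : ℕ} (hst : s < t) (γ : Γ) :
    mv (γ : SL2) (W Γ s) ≠ W Γ t := by
  intro h
  have hp := pick_spec Γ (List.ofFn (fun u : Fin t => W Γ u))
  rw [← W] at hp
  apply hp
  right
  refine Set.mem_biUnion (List.mem_ofFn.mpr ⟨⟨s, hst⟩, rfl⟩) ⟨γ, h⟩

lemma W_orbit_inj (Γ : Subgroup SL2) [Finite Γ] (s t : ℕ)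
    (h : ∃ γ : Γ, mv (γ : SL2) (W Γ s) = W Γ t) : s = t := by
  obtain ⟨γ, hγ⟩ := h
  rcases lt_trichotomy s t with hlt | heq | hgt
  · exact absurd hγ (W_not_orbit Γ hlt γ)
  · exact heq
  · exfalso
    apply W_not_orbit Γ hgt γ⁻¹
    rw [← hγ]
    rw [← mv_mul]
    norm_num [mv_one]

lemma act_apply (n : ℕ) (Γ : Subgroup SL2) (g : G n Γ) (v : Fin n → Fin 2 → ℂ)
    (i : Fin n) : act n Γ g v i = mv ((g.left i : Γ) : SL2) (v (g.right⁻¹ i)) := rfl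

lemma act_one (n : ℕ) (Γ : Subgroup SL2) (v : Fin n → Fin 2 → ℂ) :
    act n Γ 1 v = v := by
  funext i
  rw [act_apply]
  simp [mv_one]

lemma act_mul (n : ℕ) (Γ : Subgroup SL2) (g h : G n Γ) (v : Fin n → Fin 2 → ℂ) :
    act n Γ (g * h) v = act n Γ g (act n Γ h v) := by
  funext i
  rw [act_apply, act_apply, act_apply]
  have hleft : (g * h).left i = g.left i * h.left (g.right⁻¹ i) := rfl
  have hright : ((g * h).right)⁻¹ i = h.right⁻¹ (g.right⁻¹ i) := rfl
  rw [hleft, hright, Subgroup.coe_mul, mv_mul]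

lemma stab_conj (n : ℕ) (Γ : Subgroup SL2) (g : G n Γ) (v : Fin n → Fin 2 → ℂ) :
    (fun x => g * x * g⁻¹) '' stabSet n Γ v = stabSet n Γ (act n Γ g v) := by
  ext h
  constructor
  · rintro ⟨x, hx, rfl⟩
    show act n Γ (g * x * g⁻¹) (act n Γ g v) = act n Γ g v
    rw [← act_mul]
    have h2 : g * x * g⁻¹ * g = g * x := by group
    rw [h2, act_mul, show act n Γ x v = v from hx]
  · intro hh
    refine ⟨g⁻¹ * h * g, ?_, by group⟩
    show act n Γ (g⁻¹ * h * g) v = v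
    have hstab : act n Γ h (act n Γ g v) = act n Γ g v := hh
    rw [← act_mul] at hstab
    have h3 : act n Γ (g⁻¹ * (h * g)) v = act n Γ (g⁻¹ * g) v := by
      rw [act_mul, act_mul n Γ g⁻¹ g, hstab]
    rw [mul_assoc, h3, inv_mul_cancel, act_one]

lemma flatten_getElem_mem {α : Type*} :
    ∀ (ls : List (List α)) (j : ℕ) (hj : j < ls.flatten.length),
      ls.flatten[j] ∈ ls.getD (bIdx (ls.map List.length) j) [] := by
  intro ls
  induction ls with
  | nil => intro j hj; simp at hj
  | cons a ls ih =>
    intro j hj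
    simp only [List.flatten_cons] at hj ⊢
    by_cases h : j < a.length
    · rw [List.getElem_append_left h]
      have : bIdx ((a :: ls).map List.length) j = 0 := by
        simp [bIdx, h]
      simp only [List.map_cons] at this ⊢
      rw [this]
      simpa using List.getElem_mem h
    · push_neg at h
      rw [List.getElem_append_right h]
      have hj' : j - a.length < ls.flatten.length := by
        rw [List.length_append] at hj; omega
      have hb : bIdx ((a :: ls).map List.length) j
          = bIdx (ls.map List.length) (j - a.length) + 1 := by
        simp [bIdx, Nat.not_lt.mpr h]
      simp only [List.map_cons] at hb ⊢
      rw [hb, List.getD_cons_succ]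
      exact ih (j - a.length) hj'

lemma sum_map_toList {α : Type*} (s : Finset α) (f : α → ℕ) :
    (s.toList.map f).sum = s.sum f := by
  rw [Finset.sum_eq_multiset_sum]
  conv_rhs => rw [← Multiset.coe_toList s.val]
  rw [Multiset.map_coe, Multiset.sum_coe]
  rfl

lemma getElem_idx_congr {α : Type*} (l : List α) {i j : ℕ} (hij : i = j) (h : i < l.length) :
    l[i]'h = l[j]'(hij ▸ h) := by subst hij; rfl

lemma map_getD_helper {α β : Type*} (f : α → β) (l : List α) (b : ℕ) (hb : b < l.length) (d : β) :
    (l.map f).getD b d = f (l[b]'hb) := by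
  rw [List.getD_eq_getElem _ _ (by simpa using hb), List.getElem_map]

lemma part1 (n : ℕ) (hn : 1 ≤ n) (Γ : Subgroup SL2) [Finite Γ]
    (v : Fin n → Fin 2 → ℂ) :
    ∃ (m : ℕ) (lam : List ℕ) (g : G n Γ),
      m ≤ n ∧ lam.Pairwise (· ≥ ·) ∧ (∀ x ∈ lam, 0 < x) ∧ m + lam.sum = n ∧
      (fun x => g * x * g⁻¹) '' stabSet n Γ v = (H n Γ m lam : Set (G n Γ)) := by
  classical
  letI : Inhabited (Fin n) := ⟨⟨0, hn⟩⟩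
  set r : Fin n → Fin n → Prop :=
    fun i j => ∃ γ : Γ, mv (γ : SL2) (v i) = v j with hrdef
  have hrefl : ∀ i, r i i := by
    intro i
    exact ⟨1, by rw [OneMemClass.coe_one, mv_one]⟩
  have hsymm : ∀ {i j}, r i j → r j i := by
    rintro i j ⟨γ, hγ⟩
    refine ⟨γ⁻¹, ?_⟩
    have hc : ((γ⁻¹ : Γ) : SL2) = (γ : SL2)⁻¹ := rfl
    rw [hc, ← hγ, ← mv_mul, inv_mul_cancel, mv_one]
  have htrans : ∀ {i j l}, r i j → r j l → r i l := by
    rintro i j l ⟨γ, hγ⟩ ⟨δ, hδ⟩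
    refine ⟨δ * γ, ?_⟩
    rw [Subgroup.coe_mul, mv_mul, hγ, hδ]
  letI S : Setoid (Fin n) := ⟨r, hrefl, hsymm, htrans⟩
  set q : Fin n → Quotient S := fun i => Quotient.mk S i with hqdef
  have hq : ∀ x y : Fin n, q x = q y ↔ r x y := by
    intro x y
    exact ⟨fun h => Quotient.exact h, fun h => Quotient.sound h⟩
  have hr_zero : ∀ {i j}, r i j → v i = 0 → v j = 0 := by
    intro i j hij h0
    obtain ⟨γ, hγ⟩ := (hij : ∃ γ : Γ, mv (γ : SL2) (v i) = v j)
    rw [← hγ, h0, mv_zero]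
  set Z : Finset (Fin n) := Finset.univ.filter (fun i => v i = 0) with hZ
  set m := Z.card with hm
  set NZ : Finset (Fin n) := Finset.univ.filter (fun i => v i ≠ 0) with hNZ
  set Q : Finset (Quotient S) := NZ.image q with hQ
  set fib : Quotient S → Finset (Fin n) :=
    fun c => Finset.univ.filter (fun i => q i = c) with hfib
  have key : ∀ c ∈ Q, ∀ i : Fin n, q i = c → v i ≠ 0 := by
    intro c hc i hi
    obtain ⟨j, hj, hjc⟩ := Finset.mem_image.mp hc
    have hjnz : v j ≠ 0 := by
      simp only [hNZ, Finset.mem_filter] at hj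
      exact hj.2
    intro h0
    exact hjnz (hr_zero ((hq i j).mp (by rw [hi, hjc])) h0)
  set cs : List (Quotient S) :=
    (Q.toList).mergeSort (fun c d => decide ((fib d).card ≤ (fib c).card)) with hcs
  have hperm : cs.Perm Q.toList := List.mergeSort_perm _ _
  have hnodcs : cs.Nodup := hperm.nodup_iff.mpr (Finset.nodup_toList Q)
  have hmemcs : ∀ c, c ∈ cs ↔ c ∈ Q := by
    intro c
    rw [hperm.mem_iff, Finset.mem_toList]
  set lam : List ℕ := cs.map (fun c => (fib c).card) with hlam
  have hlen_lam : lam.length = cs.length := List.length_map _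
  -- sorted
  have hsorted : lam.Pairwise (· ≥ ·) := by
    have hp := List.pairwise_mergeSort
      (le := fun c d => decide ((fib d).card ≤ (fib c).card))
      (fun a b c hab hbc => by
        simp only [decide_eq_true_eq] at *
        omega)
      (fun a b => by
        simp only [Bool.or_eq_true, decide_eq_true_eq]
        omega)
      Q.toList
    rw [← hcs] at hp
    rw [hlam, List.pairwise_map]
    exact hp.imp (fun h => by simpa using h)
  -- positive
  have hpos : ∀ x ∈ lam, 0 < x := by
    intro x hx
    rw [hlam, List.mem_map] at hx
    obtain ⟨c, hc, rfl⟩ := hx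
    have hcQ := (hmemcs c).mp hc
    obtain ⟨j, _, hjc⟩ := Finset.mem_image.mp hcQ
    apply Finset.card_pos.mpr
    exact ⟨j, by simp [hfib, hjc]⟩
  -- fibers of c ∈ Q consist of nonzero coords, and equal NZ.filter
  have hfib_eq : ∀ c ∈ Q, fib c = NZ.filter (fun i => q i = c) := by
    intro c hc
    ext j
    simp only [hfib, hNZ, Finset.mem_filter, Finset.mem_univ, true_and]
    constructor
    · intro h; exact ⟨key c hc j h, h⟩
    · intro h; exact h.2
  -- sum
  have hsum : m + lam.sum = n := by
    have h1 : lam.sum = ∑ c ∈ Q, (fib c).card := by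
      rw [hlam]
      rw [List.Perm.sum_eq (List.Perm.map _ hperm)]
      exact sum_map_toList Q _
    have h2 : NZ.card = ∑ c ∈ Q, (NZ.filter (fun i => q i = c)).card :=
      Finset.card_eq_sum_card_fiberwise (fun x hx => Finset.mem_image_of_mem q hx)
    have h3 : ∑ c ∈ Q, (fib c).card = NZ.card := by
      rw [h2]
      exact Finset.sum_congr rfl (fun c hc => by rw [hfib_eq c hc])
    have h4 : Z.card + NZ.card = n := by
      have := Finset.card_filter_add_card_filter_not
        (s := (Finset.univ : Finset (Fin n))) (fun i => v i = 0)
      simpa [hZ, hNZ, Finset.card_univ] using this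
    omega
  -- the big list
  set chunks : List (List (Fin n)) := cs.map (fun c => (fib c).toList) with hchunks
  have hchunk_len : chunks.map List.length = lam := by
    rw [hchunks, hlam, List.map_map]
    exact List.map_congr_left (fun c _ => Finset.length_toList _)
  set L : List (Fin n) := Z.toList ++ chunks.flatten with hL
  have hmemfib : ∀ c (j : Fin n), j ∈ fib c ↔ q j = c := by
    intro c j
    simp [hfib]
  have hnodL : L.Nodup := by
    rw [hL, List.nodup_append]
    refine ⟨Finset.nodup_toList Z, ?_, ?_⟩
    · rw [List.nodup_flatten]
      constructor
      · intro l hl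
        rw [hchunks, List.mem_map] at hl
        obtain ⟨c, _, rfl⟩ := hl
        exact Finset.nodup_toList _
      · rw [hchunks]
        rw [List.pairwise_map]
        apply List.Pairwise.imp ?_ hnodcs
        intro c d hcd x hxc hxd
        rw [Finset.mem_toList, hmemfib] at hxc hxd
        exact hcd (hxc ▸ hxd ▸ rfl)
    · intro x hxZ y hxF hxy
      subst hxy
      rw [Finset.mem_toList, hZ, Finset.mem_filter] at hxZ
      rw [List.mem_flatten] at hxF
      obtain ⟨l, hl, hxl⟩ := hxF
      rw [hchunks, List.mem_map] at hl
      obtain ⟨c, hc, rfl⟩ := hl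
      rw [Finset.mem_toList, hmemfib] at hxl
      exact key c ((hmemcs c).mp hc) x hxl hxZ.2
  have hallL : ∀ x : Fin n, x ∈ L := by
    intro x
    rw [hL, List.mem_append]
    by_cases h0 : v x = 0
    · left
      rw [Finset.mem_toList, hZ, Finset.mem_filter]
      exact ⟨Finset.mem_univ x, h0⟩
    · right
      rw [List.mem_flatten]
      refine ⟨(fib (q x)).toList, ?_, ?_⟩
      · rw [hchunks, List.mem_map]
        refine ⟨q x, ?_, rfl⟩
        rw [hmemcs, hQ]
        exact Finset.mem_image_of_mem q (by rw [hNZ, Finset.mem_filter]; exact ⟨Finset.mem_univ x, h0⟩)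
      · rw [Finset.mem_toList, hmemfib]
  have hlenL : L.length = n := by
    rw [hL, List.length_append, List.length_flatten, hchunk_len, Finset.length_toList, ← hm, hsum]
  -- the equiv
  set e : Fin n ≃ Fin n :=
    (finCongr hlenL.symm).trans (List.Nodup.getEquivOfForallMemList L hnodL hallL) with he
  have heget : ∀ i : Fin n, ∀ (h : (i : ℕ) < L.length), e i = L[(i : ℕ)] := by
    intro i h
    rfl
  have hZlen : Z.toList.length = m := by rw [Finset.length_toList, hm]
  -- K1
  have K1 : ∀ i : Fin n, (i : ℕ) < m → v (e i) = 0 := by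
    intro i hi
    have h1 : (i : ℕ) < L.length := by rw [hlenL]; exact i.2
    rw [heget i h1]
    have h2 : (i : ℕ) < Z.toList.length := by omega
    have h3 : L[(i : ℕ)]'h1 = Z.toList[(i : ℕ)]'h2 :=
      List.getElem_append_left (h' := hL ▸ h1) h2
    rw [h3]
    have hZmem : ∀ x : Fin n, x ∈ Z → v x = 0 := by
      intro x hx
      rw [hZ, Finset.mem_filter] at hx
      exact hx.2
    exact hZmem _ (Finset.mem_toList.mp (List.getElem_mem h2))
  -- K2
  have K2 : ∀ i : Fin n, m ≤ (i : ℕ) →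
      ∃ hb : bIdx lam ((i : ℕ) - m) < cs.length, e i ∈ fib (cs[bIdx lam ((i : ℕ) - m)]'hb) := by
    intro i hi
    have h1 : (i : ℕ) < L.length := by rw [hlenL]; exact i.2
    have hflen : chunks.flatten.length = lam.sum := by
      rw [List.length_flatten, hchunk_len]
    have h2 : (i : ℕ) - m < chunks.flatten.length := by
      rw [hflen]
      have := i.2
      omega
    have h3 : L[(i : ℕ)]'h1 = chunks.flatten[(i : ℕ) - m]'h2 := by
      have ha : L[(i : ℕ)]'h1
          = chunks.flatten[(i : ℕ) - Z.toList.length]'(by rw [hZlen]; exact h2) :=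
        List.getElem_append_right (h₂ := hL ▸ h1) (by omega)
      rw [ha]
      exact getElem_idx_congr _ (by omega) _
    have hb : bIdx lam ((i : ℕ) - m) < cs.length := by
      rw [← hlen_lam]
      exact (bIdx_spec lam ((i : ℕ) - m) (by rw [← hflen]; exact h2)).2.2
    refine ⟨hb, ?_⟩
    obtain ⟨x, hx_eq, hx_mem⟩ :
        ∃ x, x = chunks.flatten[(i : ℕ) - m]'h2 ∧
          x ∈ chunks.getD (bIdx (chunks.map List.length) ((i : ℕ) - m)) [] :=
      ⟨_, rfl, flatten_getElem_mem chunks _ h2⟩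
    rw [hchunk_len] at hx_mem
    have h5 : chunks.getD (bIdx lam ((i : ℕ) - m)) []
        = (fib (cs[bIdx lam ((i : ℕ) - m)]'hb)).toList := by
      rw [hchunks]
      exact map_getD_helper _ cs _ hb []
    rw [h5, Finset.mem_toList] at hx_mem
    rw [heget i h1, h3, ← hx_eq]
    exact hx_mem
  -- representatives and w
  have hfib_ne : ∀ t (ht : t < cs.length), (fib (cs[t]'ht)).toList ≠ [] := by
    intro t ht
    have hcQ : cs[t]'ht ∈ Q := (hmemcs _).mp (List.getElem_mem ht)
    obtain ⟨j, _, hjc⟩ := Finset.mem_image.mp hcQ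
    intro hnil
    have : fib (cs[t]'ht) = ∅ := Finset.toList_eq_nil.mp hnil
    have hj : j ∈ fib (cs[t]'ht) := (hmemfib _ j).mpr hjc
    rw [this] at hj
    exact absurd hj (Finset.notMem_empty j)
  set rep : ∀ t, t < cs.length → Fin n :=
    fun t _ => (fib (cs.getD t (q default))).toList.head! with hrep
  set w : ℕ → Fin 2 → ℂ := fun t =>
    if h : t < cs.length then v ((fib (cs[t]'h)).toList.head!) else v default with hw
  have hrep_mem : ∀ t (ht : t < cs.length), (fib (cs[t]'ht)).toList.head! ∈ fib (cs[t]'ht) := by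
    intro t ht
    rw [← Finset.mem_toList]
    exact List.head!_mem_self (hfib_ne t ht)
  have hw_eq : ∀ t (ht : t < cs.length), w t = v ((fib (cs[t]'ht)).toList.head!) := by
    intro t ht
    rw [hw]
    simp [ht]
  have hw0 : ∀ t, t < lam.length → w t ≠ 0 := by
    intro t ht
    rw [hlen_lam] at ht
    rw [hw_eq t ht]
    have := hrep_mem t ht
    rw [hmemfib] at this
    exact key _ ((hmemcs _).mp (List.getElem_mem ht)) _ this
  have hworb : ∀ s t, s < lam.length → t < lam.length →
      (∃ γ : Γ, mv (γ : SL2) (w s) = w t) → s = t := by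
    intro s t hs ht hex
    rw [hlen_lam] at hs ht
    rw [hw_eq s hs, hw_eq t ht] at hex
    have hr : r ((fib (cs[s]'hs)).toList.head!) ((fib (cs[t]'ht)).toList.head!) := hex
    have hqq := (hq _ _).mpr hr
    have hqs : q ((fib (cs[s]'hs)).toList.head!) = cs[s]'hs := by
      have := hrep_mem s hs; rwa [hmemfib] at this
    have hqt : q ((fib (cs[t]'ht)).toList.head!) = cs[t]'ht := by
      have := hrep_mem t ht; rwa [hmemfib] at this
    rw [hqs, hqt] at hqq
    exact (hnodcs.getElem_inj_iff).mp hqq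
  -- the group element
  have hex : ∀ i : Fin n, m ≤ (i : ℕ) →
      ∃ γ : Γ, mv (γ : SL2) (v (e i)) = w (bIdx lam ((i : ℕ) - m)) := by
    intro i hi
    obtain ⟨hb, hmem⟩ := K2 i hi
    rw [hmemfib] at hmem
    rw [hw_eq _ hb]
    have hqr : q ((fib (cs[bIdx lam ((i : ℕ) - m)]'hb)).toList.head!)
        = cs[bIdx lam ((i : ℕ) - m)]'hb := by
      have := hrep_mem _ hb; rwa [hmemfib] at this
    have : q (e i) = q ((fib (cs[bIdx lam ((i : ℕ) - m)]'hb)).toList.head!) := by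
      rw [hmem, hqr]
    exact (hq _ _).mp this
  set δ : Fin n → Γ := fun i =>
    if h : m ≤ (i : ℕ) then (hex i h).choose else 1 with hδ
  set g : G n Γ := ⟨δ, e.symm⟩ with hg
  have hgleft : g.left = δ := rfl
  have hgright : g.right⁻¹ = (e : Equiv.Perm (Fin n)) := by
    rw [hg]
    show (e.symm)⁻¹ = e
    rfl
  have hact : act n Γ g v = canon n m lam w := by
    funext i
    rw [act_apply, canon]
    have hiv : g.right⁻¹ i = e i := by rw [hgright]
    rw [hiv, hgleft]
    by_cases h : (i : ℕ) < m
    · rw [hδ]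
      simp only [dif_neg (Nat.not_le.mpr h)]
      rw [K1 i h, OneMemClass.coe_one, mv_zero, if_pos h]
    · rw [hδ]
      simp only [dif_pos (Nat.le_of_not_lt h)]
      rw [(hex i (Nat.le_of_not_lt h)).choose_spec, if_neg h]
  refine ⟨m, lam, g, ?_, hsorted, hpos, hsum, ?_⟩
  · rw [hm]
    calc Z.card ≤ (Finset.univ : Finset (Fin n)).card := Finset.card_le_univ Z
      _ = n := by simp
  · rw [stab_conj, hact]
    exact stab_eq n m lam Γ hsum w hw0 hworb


end WreathCM


open WreathCM Matrix in
/-- For every `v ∈ V` there exist an integer `0 ≤ m ≤ n`, a partition `λ` of `n − m`,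
and `g ∈ G` such that `g·Stab_G(v)·g⁻¹ = H(m,λ)`; conversely, every subgroup `H(m,λ)`
with `m + |λ| = n` is the stabilizer in `G` of some point of `V`. -/
theorem stabilizers_are_parabolics (n : ℕ) (hn : 1 ≤ n)
    (Γ : Subgroup (SpecialLinearGroup (Fin 2) ℂ)) [Finite Γ] :
    (∀ v : Fin n → Fin 2 → ℂ,
      ∃ (m : ℕ) (lam : List ℕ) (g : G n Γ),
        m ≤ n ∧ lam.Pairwise (· ≥ ·) ∧ (∀ x ∈ lam, 0 < x) ∧ m + lam.sum = n ∧
        (fun x => g * x * g⁻¹) '' stabSet n Γ v = (H n Γ m lam : Set (G n Γ))) ∧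
    (∀ (m : ℕ) (lam : List ℕ), lam.Pairwise (· ≥ ·) → (∀ x ∈ lam, 0 < x) →
      m + lam.sum = n →
      ∃ v : Fin n → Fin 2 → ℂ, stabSet n Γ v = (H n Γ m lam : Set (G n Γ))) := by
  constructor
  · intro v
    exact part1 n hn Γ v
  · intro m lam _ _ hsum
    exact ⟨canon n m lam (W Γ),
      stab_eq n m lam Γ hsum (W Γ) (fun t _ => W_ne_zero Γ t)
        (fun s t _ _ h => W_orbit_inj Γ s t h)⟩
end

section
/- Assume c(δ) = −1. Then R_c = R_c⁺ ∪ (−R_c⁺), and every element of R_c⁺ is a finite sum of (one or more) elements of Δ(c); in other words, Δ(c) is a set of simple roots for the root system R_c whose corresponding positive roots are precisely R_c⁺. -/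
open Finset

namespace AffineRoots

/-- The vertex set `I = {0,1,…,r}` of the graph. -/
abbrev I (r : ℕ) := Fin (r + 1)

/-- The root lattice `Q = ℤ^I`. -/
abbrev Q (r : ℕ) := I r → ℤ

variable (r : ℕ)

/-- The standard basis vector (simple root) `e_i` of `Q`. -/
def e (i : I r) : Q r := Pi.single i 1

/-- The Cartan pairing matrix `(e_i, e_j) = 2·[i=j] − a_{ij}` attached to a graph with
`a i j` edges between `i` and `j`. -/
def cartan (a : I r → I r → ℕ) (i j : I r) : ℤ :=
  (if i = j then 2 else 0) - (a i j : ℤ)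

/-- The symmetric bilinear form on `Q` determined by the Cartan pairing. -/
def B (a : I r → I r → ℕ) (α β : Q r) : ℤ :=
  ∑ i, ∑ j, α i * cartan r a i j * β j

/-- The reflection `s_i(α) = α − (α,e_i)·e_i`. -/
def refl (a : I r → I r → ℕ) (i : I r) (α : Q r) : Q r :=
  α - B r a α (e r i) • e r i

/-- The Weyl group `W`: the group of bijections of `Q` generated by the reflections. -/
def W (a : I r → I r → ℕ) : Subgroup (Equiv.Perm (Q r)) :=
  Subgroup.closure {σ | ∃ i : I r, ∀ α, σ α = refl r a i α}

/-- The support of `α` is connected in the graph. -/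
def SuppConnected (a : I r → I r → ℕ) (α : Q r) : Prop :=
  ∀ i j : I r, α i ≠ 0 → α j ≠ 0 →
    Relation.ReflTransGen (fun x y => α x ≠ 0 ∧ α y ≠ 0 ∧ 0 < a x y) i j

/-- The fundamental region `F`: nonzero `α ∈ ℕ^I` with connected support and
`(α,e_i) ≤ 0` for all `i`. -/
def Fund (a : I r → I r → ℕ) : Set (Q r) :=
  {α | α ≠ 0 ∧ (∀ i, 0 ≤ α i) ∧ SuppConnected r a α ∧ ∀ i, B r a α (e r i) ≤ 0}

/-- The real roots: the `W`-orbits of the basis vectors. -/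
def RealRoots (a : I r → I r → ℕ) : Set (Q r) :=
  {α | ∃ σ ∈ W r a, ∃ i, α = σ (e r i)}

/-- The imaginary roots: `W·F` and its negative. -/
def ImRoots (a : I r → I r → ℕ) : Set (Q r) :=
  {α | ∃ σ ∈ W r a, ∃ β ∈ Fund r a, α = σ β ∨ α = -(σ β)}

/-- The root system `R`, consisting of all real and imaginary roots. -/
def Roots (a : I r → I r → ℕ) : Set (Q r) := RealRoots r a ∪ ImRoots r a

/-- The positive roots `R⁺ = R ∩ ℕ^I`. -/
def PosRoots (a : I r → I r → ℕ) : Set (Q r) :=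
  {α ∈ Roots r a | ∀ i, 0 ≤ α i}

/-- `R_c = {α ∈ R : c(α) = 0}`. -/
def Rc (a : I r → I r → ℕ) (c : Q r →ₗ[ℤ] ℂ) : Set (Q r) :=
  {α ∈ Roots r a | c α = 0}

/-- `R_c⁺ = R_c ∩ R⁺`. -/
def RcPos (a : I r → I r → ℕ) (c : Q r →ₗ[ℤ] ℂ) : Set (Q r) :=
  Rc r a c ∩ PosRoots r a

/-- `Δ(c)`: the minimal elements of `R_c⁺`, i.e. those which cannot be written as a sum
of two elements of `R_c⁺`. -/
def Dc (a : I r → I r → ℕ) (c : Q r →ₗ[ℤ] ℂ) : Set (Q r) :=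
  {α ∈ RcPos r a c | ¬ ∃ β ∈ RcPos r a c, ∃ γ ∈ RcPos r a c, α = β + γ}

/-- The hypotheses characterizing a simply laced affine Dynkin graph, together with the
distinguished imaginary root `δ`: the graph (with `a i j` edges between `i` and `j`) is
symmetric, loopless and connected; the Cartan form is positive semidefinite; and the
radical of the form is `ℤδ`, where `δ` has positive coordinates and `δ_0 = 1`. -/
structure AffineData (a : I r → I r → ℕ) (δ : Q r) : Prop where
  symm : ∀ i j, a i j = a j i
  noloops : ∀ i, a i i = 0
  connected : ∀ i j : I r, Relation.ReflTransGen (fun x y => 0 < a x y) i j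
  posSemidef : ∀ α : Q r, 0 ≤ B r a α α
  delta_pos : ∀ i, 0 < δ i
  delta_zero : δ 0 = 1
  radical : ∀ α : Q r, (∀ β, B r a α β = 0) ↔ ∃ n : ℤ, α = n • δ

end AffineRoots

namespace AffineRoots
variable (r : ℕ) (a : I r → I r → ℕ)

lemma B_add_left (x y z : Q r) : B r a (x + y) z = B r a x z + B r a y z := by
  simp [B, add_mul, Finset.sum_add_distrib]

lemma B_add_right (x y z : Q r) : B r a x (y + z) = B r a x y + B r a x z := by
  simp [B, mul_add, Finset.sum_add_distrib]

lemma B_smul_left (n : ℤ) (x z : Q r) : B r a (n • x) z = n * B r a x z := by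
  simp only [B, Finset.mul_sum]
  refine Finset.sum_congr rfl fun i _ => Finset.sum_congr rfl fun j _ => ?_
  simp [Pi.smul_apply, smul_eq_mul]; ring

lemma B_smul_right (n : ℤ) (x z : Q r) : B r a x (n • z) = n * B r a x z := by
  simp only [B, Finset.mul_sum]
  refine Finset.sum_congr rfl fun i _ => Finset.sum_congr rfl fun j _ => ?_
  simp [Pi.smul_apply, smul_eq_mul]; ring

lemma B_sub_left (x y z : Q r) : B r a (x - y) z = B r a x z - B r a y z := by
  simp [B, sub_mul, Finset.sum_sub_distrib]

lemma B_sub_right (x y z : Q r) : B r a x (y - z) = B r a x y - B r a x z := by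
  simp [B, mul_sub, Finset.sum_sub_distrib]

lemma B_symm (hs : ∀ i j, a i j = a j i) (x y : Q r) : B r a x y = B r a y x := by
  rw [B, Finset.sum_comm, B]
  refine Finset.sum_congr rfl fun j _ => Finset.sum_congr rfl fun i _ => ?_
  rw [cartan, cartan, hs j i]
  by_cases h : i = j
  · simp [h]; ring
  · have h' : ¬ j = i := fun hh => h hh.symm
    simp [h, h']; ring

lemma B_e_right (x : Q r) (i : I r) : B r a x (e r i) = ∑ k, x k * cartan r a k i := by
  unfold B e
  refine Finset.sum_congr rfl fun k _ => ?_
  simp [Pi.single_apply, mul_ite]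

lemma B_e_e (i j : I r) : B r a (e r i) (e r j) = cartan r a i j := by
  rw [B_e_right]
  unfold e
  simp [Pi.single_apply, ite_mul]

variable {r a}

lemma cartan_self (hnl : ∀ i, a i i = 0) (i : I r) : cartan r a i i = 2 := by
  simp [cartan, hnl i]

lemma B_e_e_self (hnl : ∀ i, a i i = 0) (i : I r) : B r a (e r i) (e r i) = 2 := by
  rw [B_e_e, cartan_self hnl]

lemma refl_add (i : I r) (x y : Q r) :
    refl r a i (x + y) = refl r a i x + refl r a i y := by
  simp only [refl, B_add_left, add_smul]
  abel

lemma B_refl_refl (hs : ∀ i j, a i j = a j i) (hnl : ∀ i, a i i = 0) (i : I r) (x y : Q r) :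
    B r a (refl r a i x) (refl r a i y) = B r a x y := by
  have h1 : B r a (e r i) y = B r a y (e r i) := B_symm r a hs _ _
  simp only [refl, B_sub_left, B_sub_right, B_smul_left, B_smul_right,
    B_e_e_self hnl, h1]
  ring

lemma refl_invol (hs : ∀ i j, a i j = a j i) (hnl : ∀ i, a i i = 0) (i : I r) :
    Function.Involutive (refl r a i) := by
  intro x
  simp only [refl, B_sub_left, B_smul_left, B_e_e_self hnl]
  have : B r a x (e r i) - B r a x (e r i) * 2 = -(B r a x (e r i)) := by ring
  rw [this]
  simp [sub_smul, neg_smul]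

/-- Cauchy–Schwarz style: a vector of norm zero is in the radical. -/
lemma B_eq_zero_of_self_eq_zero (hs : ∀ i j, a i j = a j i)
    (psd : ∀ α : Q r, 0 ≤ B r a α α) {x : Q r} (hx : B r a x x = 0) (y : Q r) :
    B r a x y = 0 := by
  by_contra hX
  set X := B r a x y with hXdef
  set C := B r a y y with hCdef
  have hC : 0 ≤ C := psd y
  have key := psd ((-X * (C + 1)) • x + y)
  simp only [B_add_left, B_add_right, B_smul_left, B_smul_right, hx,
    B_symm r a hs y x] at key
  have hX2 : 1 ≤ X * X := by
    rcases lt_or_gt_of_ne hX with h | h <;> nlinarith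
  nlinarith

lemma radical_of_norm_zero (hs : ∀ i j, a i j = a j i)
    (psd : ∀ α : Q r, 0 ≤ B r a α α)
    {δ : Q r} (hrad : ∀ α : Q r, (∀ β, B r a α β = 0) ↔ ∃ n : ℤ, α = n • δ)
    {x : Q r} (hx : B r a x x = 0) : ∃ n : ℤ, x = n • δ :=
  (hrad x).mp (B_eq_zero_of_self_eq_zero hs psd hx)

/-- Evenness of the quadratic form. -/
lemma B_self_even (hs : ∀ i j, a i j = a j i) (hnl : ∀ i, a i i = 0) (x : Q r) :
    Even (B r a x x) := by
  rw [even_iff_two_dvd, show ((2:ℤ)) = ((2:ℕ):ℤ) from rfl, ← ZMod.intCast_zmod_eq_zero_iff_dvd]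
  unfold B
  push_cast
  rw [← Finset.sum_product']
  rw [← Finset.diag_union_offDiag (Finset.univ : Finset (I r)),
    Finset.sum_union (Finset.disjoint_diag_offDiag _)]
  have h1 : ∑ p ∈ (Finset.univ : Finset (I r)).diag,
      ((x p.1 : ZMod 2) * (cartan r a p.1 p.2 : ZMod 2) * (x p.2 : ZMod 2)) = 0 := by
    rw [Finset.sum_diag]
    refine Finset.sum_eq_zero fun i _ => ?_
    rw [cartan_self hnl]
    push_cast
    ring_nf
    simp
    exact Or.inr (by decide)
  have h2 : ∑ p ∈ (Finset.univ : Finset (I r)).offDiag,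
      ((x p.1 : ZMod 2) * (cartan r a p.1 p.2 : ZMod 2) * (x p.2 : ZMod 2)) = 0 := by
    refine Finset.sum_involution (fun p _ => (p.2, p.1)) ?_ ?_ ?_ ?_
    · intro p hp
      have : (cartan r a p.2 p.1 : ZMod 2) = (cartan r a p.1 p.2 : ZMod 2) := by
        rw [cartan, cartan, hs p.1 p.2]
        rcases Finset.mem_offDiag.mp hp with ⟨-, -, hne⟩
        have h' : ¬ p.2 = p.1 := fun hh => hne hh.symm
        simp [hne, h']
      rw [this]
      ring_nf
      simp
      exact Or.inr (by decide)
    · intro p hp _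
      rcases Finset.mem_offDiag.mp hp with ⟨-, -, hne⟩
      intro hcon
      exact hne (congrArg Prod.snd hcon)
    · intro p hp
      rcases Finset.mem_offDiag.mp hp with ⟨h1, h2, hne⟩
      exact Finset.mem_offDiag.mpr ⟨h2, h1, fun hh => hne hh.symm⟩
    · intro p hp; rfl
  rw [h1, h2, add_zero]

/-- Sign coherence of norm-2 vectors. -/
lemma sign_coherent {δ : Q r} (hd : AffineData r a δ) {x : Q r}
    (h2 : B r a x x = 2) : (∀ i, 0 ≤ x i) ∨ (∀ i, x i ≤ 0) := by
  classical
  set p : Q r := fun i => max (x i) 0 with hp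
  set m : Q r := fun i => max (-(x i)) 0 with hm
  have hxpm : x = p - m := by
    funext i; simp only [hp, hm, Pi.sub_apply]; omega
  have hpnn : ∀ i, 0 ≤ p i := fun i => le_max_right _ _
  have hmnn : ∀ i, 0 ≤ m i := fun i => le_max_right _ _
  have hdisj : ∀ i, p i = 0 ∨ m i = 0 := by
    intro i; simp [hp, hm]; omega
  -- cross term nonpositive
  have hX : B r a p m ≤ 0 := by
    unfold B
    refine Finset.sum_nonpos fun i _ => Finset.sum_nonpos fun j _ => ?_
    by_cases hij : i = j
    · subst hij
      rcases hdisj i with h | h <;> simp [h]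
    · have hc : cartan r a i j ≤ 0 := by
        simp only [cartan, if_neg hij]
        have : (0:ℤ) ≤ (a i j : ℤ) := Int.natCast_nonneg _
        omega
      have := mul_nonneg (hpnn i) (hmnn j)
      nlinarith
  have hsymmX : B r a m p = B r a p m := B_symm r a hd.symm m p
  have hexp : B r a x x = B r a p p + B r a m m - 2 * B r a p m := by
    rw [hxpm, B_sub_left, B_sub_right, B_sub_right, hsymmX]; ring
  have hpp : 0 ≤ B r a p p := hd.posSemidef p
  have hmm : 0 ≤ B r a m m := hd.posSemidef m
  -- helper: if one part is radical
  have key : ∀ y z : Q r, (∀ i, 0 ≤ y i) → (∀ i, y i = 0 ∨ z i = 0) →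
      B r a y y = 0 → y = 0 ∨ ∀ i, z i = 0 := by
    intro y z hynn hdyz hy0
    obtain ⟨n, hn⟩ := radical_of_norm_zero hd.symm hd.posSemidef hd.radical hy0
    by_cases hn0 : n = 0
    · left; rw [hn, hn0, zero_smul]
    · right
      intro i
      have hyi : y i = n * δ i := by rw [hn]; simp
      have hni : 1 ≤ n := by
        have h0 := hynn i
        rcases lt_or_gt_of_ne hn0 with h | h
        · exfalso; nlinarith [hd.delta_pos i, hyi ▸ h0]
        · omega
      have : y i ≠ 0 := by
        have := hd.delta_pos i
        rw [hyi]; positivity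
      rcases hdyz i with h | h
      · exact absurd h this
      · exact h
  by_cases hm0 : B r a m m = 0
  · rcases key m p hmnn (fun i => (hdisj i).symm) hm0 with h | h
    · left; intro i
      have : m i = 0 := by rw [h]; rfl
      have := hpnn i
      rw [hxpm]; simp [this]; omega
    · right; intro i
      have h1 : p i = 0 := h i
      have := hmnn i
      rw [hxpm]; simp [h1]; omega
  · by_cases hp0 : B r a p p = 0
    · rcases key p m hpnn hdisj hp0 with h | h
      · right; intro i
        have : p i = 0 := by rw [h]; rfl
        have := hmnn i
        rw [hxpm]; simp [this]; omega
      · left; intro i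
        have h1 : m i = 0 := h i
        have := hpnn i
        rw [hxpm]; simp [h1]; omega
    · exfalso
      have e1 : 2 ≤ B r a p p := by
        rcases B_self_even hd.symm hd.noloops p with ⟨k, hk⟩
        omega
      have e2 : 2 ≤ B r a m m := by
        rcases B_self_even hd.symm hd.noloops m with ⟨k, hk⟩
        omega
      omega

lemma B_delta_zero {δ : Q r} (hd : AffineData r a δ) (y : Q r) : B r a δ y = 0 :=
  ((hd.radical δ).mpr ⟨1, (one_smul _ _).symm⟩) y

lemma refl_delta {δ : Q r} (hd : AffineData r a δ) (i : I r) : refl r a i δ = δ := by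
  rw [refl, B_delta_zero hd]
  simp

lemma W_props {δ : Q r} (hd : AffineData r a δ) {σ : Equiv.Perm (Q r)} (hσ : σ ∈ W r a) :
    (∀ x y, σ (x + y) = σ x + σ y) ∧ σ δ = δ ∧
      ∀ x y, B r a (σ x) (σ y) = B r a x y := by
  induction hσ using Subgroup.closure_induction with
  | mem τ hτ =>
    obtain ⟨i, hi⟩ := hτ
    refine ⟨fun x y => ?_, ?_, fun x y => ?_⟩
    · rw [hi, hi, hi, refl_add]
    · rw [hi, refl_delta hd]
    · rw [hi, hi, B_refl_refl hd.symm hd.noloops]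
  | one => exact ⟨fun x y => rfl, rfl, fun x y => rfl⟩
  | mul σ τ h1 h2 ih1 ih2 =>
    obtain ⟨ha1, hd1, hb1⟩ := ih1
    obtain ⟨ha2, hd2, hb2⟩ := ih2
    refine ⟨fun x y => ?_, ?_, fun x y => ?_⟩
    · simp only [Equiv.Perm.mul_apply, ha2, ha1]
    · simp only [Equiv.Perm.mul_apply, hd2, hd1]
    · simp only [Equiv.Perm.mul_apply, hb1, hb2]
  | inv σ h ih =>
    obtain ⟨ha1, hd1, hb1⟩ := ih
    refine ⟨fun x y => σ.injective ?_, σ.injective ?_, fun x y => ?_⟩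
    · rw [ha1, (show ∀ y, σ (σ⁻¹ y) = y from fun y => σ.apply_symm_apply y), (show ∀ y, σ (σ⁻¹ y) = y from fun y => σ.apply_symm_apply y),
        (show ∀ y, σ (σ⁻¹ y) = y from fun y => σ.apply_symm_apply y)]
    · rw [(show ∀ y, σ (σ⁻¹ y) = y from fun y => σ.apply_symm_apply y), hd1]
    · rw [← hb1 (σ⁻¹ x) (σ⁻¹ y), (show ∀ y, σ (σ⁻¹ y) = y from fun y => σ.apply_symm_apply y), (show ∀ y, σ (σ⁻¹ y) = y from fun y => σ.apply_symm_apply y)]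

lemma W_zero {σ : Equiv.Perm (Q r)} (hadd : ∀ x y, σ (x + y) = σ x + σ y) : σ 0 = 0 := by
  have := hadd 0 0
  simpa using this.symm

lemma W_neg {σ : Equiv.Perm (Q r)} (hadd : ∀ x y, σ (x + y) = σ x + σ y) (x : Q r) :
    σ (-x) = -(σ x) := by
  have h := hadd x (-x)
  rw [add_neg_cancel, W_zero hadd] at h
  exact eq_neg_of_add_eq_zero_right h.symm

lemma W_zsmul {σ : Equiv.Perm (Q r)} (hadd : ∀ x y, σ (x + y) = σ x + σ y)
    (n : ℤ) (x : Q r) : σ (n • x) = n • (σ x) :=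
  map_zsmul (AddMonoidHom.mk' σ hadd) n x

/-- Imaginary roots are the nonzero multiples of δ. -/
lemma imroots_eq {δ : Q r} (hd : AffineData r a δ) {x : Q r} (hx : x ∈ ImRoots r a) :
    ∃ n : ℤ, 1 ≤ n ∧ (x = n • δ ∨ x = -(n • δ)) := by
  obtain ⟨σ, hσ, β, ⟨hβ0, hβnn, -, hβi⟩, hor⟩ := hx
  have hββ : B r a β β = 0 := by
    have h1 : B r a β β ≤ 0 := by
      have : B r a β β = ∑ i, β i * B r a β (e r i) := by
        rw [B]
        refine Finset.sum_congr rfl fun i _ => ?_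
        rw [B_e_right, Finset.mul_sum]
        refine Finset.sum_congr rfl fun j _ => ?_
        rw [cartan, cartan, hd.symm i j]
        by_cases h : i = j
        · subst h; ring
        · have h' : ¬ j = i := fun hh => h hh.symm
          simp only [if_neg h, if_neg h']
          ring
      rw [this]
      exact Finset.sum_nonpos fun i _ => mul_nonpos_of_nonneg_of_nonpos (hβnn i) (hβi i)
    exact le_antisymm h1 (hd.posSemidef β)
  obtain ⟨n, hn⟩ := radical_of_norm_zero hd.symm hd.posSemidef hd.radical hββ
  obtain ⟨hadd, hdel, -⟩ := W_props hd hσ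
  have hσβ : σ β = n • δ := by
    rw [hn, W_zsmul hadd, hdel]
  have hn1 : 1 ≤ n := by
    have h0 : β 0 = n * δ 0 := by rw [hn]; simp
    rw [hd.delta_zero, mul_one] at h0
    rcases lt_trichotomy n 0 with h | h | h
    · exact absurd (h0 ▸ hβnn 0) (by omega)
    · exact absurd (by rw [hn, h, zero_smul]) hβ0
    · omega
  exact ⟨n, hn1, by rcases hor with h | h <;> [left; right] <;> rw [h, hσβ]⟩

/-- Real roots have norm 2 and are nonzero. -/
lemma realroot_norm {δ : Q r} (hd : AffineData r a δ) {x : Q r} (hx : x ∈ RealRoots r a) :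
    B r a x x = 2 ∧ x ≠ 0 := by
  obtain ⟨σ, hσ, i, hi⟩ := hx
  obtain ⟨hadd, -, hB⟩ := W_props hd hσ
  constructor
  · rw [hi, hB, B_e_e_self hd.noloops]
  · rw [hi]
    intro h
    have : e r i = 0 := by
      have h0 : σ 0 = 0 := W_zero hadd
      exact σ.injective (h.trans h0.symm)
    have := congrFun this i
    simp [e] at this

/-- Roots are closed under negation. -/
lemma neg_root {δ : Q r} (hd : AffineData r a δ) {x : Q r} (hx : x ∈ Roots r a) :
    -x ∈ Roots r a := by
  rcases hx with ⟨σ, hσ, i, hi⟩ | ⟨σ, hσ, β, hβ, hor⟩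
  · left
    have hsmem : (refl_invol (a := a) hd.symm hd.noloops i).toPerm ∈ W r a :=
      Subgroup.subset_closure ⟨i, fun α => rfl⟩
    refine ⟨σ * _, mul_mem hσ hsmem, i, ?_⟩
    obtain ⟨hadd, -, -⟩ := W_props hd hσ
    rw [hi, Equiv.Perm.mul_apply]
    show -(σ (e r i)) = σ (refl r a i (e r i))
    have : refl r a i (e r i) = -(e r i) := by
      rw [refl, B_e_e_self hd.noloops]
      funext j
      simp only [Pi.sub_apply, Pi.smul_apply, Pi.neg_apply, smul_eq_mul]
      ring
    rw [this, W_neg hadd]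
  · right
    exact ⟨σ, hσ, β, hβ, by rcases hor with h | h <;> [right; left] <;> rw [h] <;> simp⟩

/-- Imaginary roots have nonzero `c`-value. -/
lemma imroot_c_ne {δ : Q r} (hd : AffineData r a δ) (c : Q r →ₗ[ℤ] ℂ) (hc : c δ = -1)
    {x : Q r} (hx : x ∈ ImRoots r a) : c x ≠ 0 := by
  obtain ⟨n, hn1, hor⟩ := imroots_eq hd hx
  have hδ : c (n • δ) = -(n : ℂ) := by
    rw [map_zsmul, hc, zsmul_eq_mul]
    push_cast
    ring
  have hne : (n : ℂ) ≠ 0 := Int.cast_ne_zero.mpr (by omega)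
  rcases hor with h | h <;> rw [h]
  · rw [hδ]; simpa using hne
  · rw [map_neg, hδ]; simpa using hne

/-- Elements of `R_c` are real roots. -/
lemma Rc_real {δ : Q r} (hd : AffineData r a δ) (c : Q r →ₗ[ℤ] ℂ) (hc : c δ = -1)
    {x : Q r} (hx : x ∈ Rc r a c) : x ∈ RealRoots r a := by
  obtain ⟨hroot, hcx⟩ := hx
  rcases hroot with h | h
  · exact h
  · exact absurd hcx (imroot_c_ne hd c hc h)

/-- Elements of `R_c⁺` have height at least 1. -/
lemma RcPos_height {δ : Q r} (hd : AffineData r a δ) (c : Q r →ₗ[ℤ] ℂ) (hc : c δ = -1)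
    {x : Q r} (hx : x ∈ RcPos r a c) : 1 ≤ ∑ i, x i := by
  obtain ⟨hRc, hroot, hnn⟩ := hx
  have hreal := Rc_real hd c hc hRc
  have hne : x ≠ 0 := (realroot_norm hd hreal).2
  obtain ⟨i, hi⟩ : ∃ i, x i ≠ 0 := by
    by_contra h
    push_neg at h
    exact hne (funext fun i => h i)
  have h1 : 1 ≤ x i := by have := hnn i; omega
  calc (1:ℤ) ≤ x i := h1
    _ ≤ ∑ j, x j := Finset.single_le_sum (fun j _ => hnn j) (Finset.mem_univ i)

end AffineRoots

open AffineRoots in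
/-- Assume `c(δ) = −1`.  Then `R_c = R_c⁺ ∪ (−R_c⁺)`, and every element of `R_c⁺` is a
finite sum of (one or more) elements of `Δ(c)`; in other words, `Δ(c)` is a set of simple
roots for the root system `R_c` whose corresponding positive roots are precisely `R_c⁺`. -/
theorem Dc_is_simple_system (r : ℕ) (a : I r → I r → ℕ) (δ : Q r)
    (hdata : AffineData r a δ) (c : Q r →ₗ[ℤ] ℂ) (hc : c δ = -1) :
    Rc r a c = RcPos r a c ∪ (-(RcPos r a c)) ∧
    ∀ α ∈ RcPos r a c, ∃ (k : ℕ) (f : Fin k → Q r),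
      0 < k ∧ (∀ t, f t ∈ Dc r a c) ∧ α = ∑ t, f t := by
  constructor
  · ext x
    constructor
    · intro hx
      obtain ⟨hroot, hcx⟩ := hx
      have hreal := Rc_real hdata c hc ⟨hroot, hcx⟩
      obtain ⟨h2, -⟩ := realroot_norm hdata hreal
      rcases sign_coherent hdata h2 with hpos | hneg
      · exact Or.inl ⟨⟨hroot, hcx⟩, hroot, hpos⟩
      · right
        rw [Set.mem_neg]
        have hnroot : -x ∈ Roots r a := neg_root hdata hroot
        refine ⟨⟨hnroot, by rw [map_neg, hcx, neg_zero]⟩, hnroot, fun i => ?_⟩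
        have := hneg i
        simp only [Pi.neg_apply]
        omega
    · intro hx
      rcases hx with ⟨hRc, -⟩ | hx
      · exact hRc
      · rw [Set.mem_neg] at hx
        obtain ⟨⟨hroot, hcx⟩, -⟩ := hx
        have : x = -(-x) := by simp
        refine ⟨this ▸ neg_root hdata hroot, ?_⟩
        have h' : c (-x) = -(c x) := map_neg c x
        rw [h'] at hcx
        exact neg_eq_zero.mp hcx
  · have key : ∀ n : ℕ, ∀ α ∈ RcPos r a c, (∑ i, α i) ≤ (n:ℤ) →
        ∃ (k : ℕ) (f : Fin k → Q r),
          0 < k ∧ (∀ t, f t ∈ Dc r a c) ∧ α = ∑ t, f t := by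
      intro n
      induction n with
      | zero =>
        intro α hα hle
        have := RcPos_height hdata c hc hα
        exfalso
        simp at hle
        omega
      | succ n ih =>
        intro α hα hle
        by_cases hmin : α ∈ Dc r a c
        · exact ⟨1, fun _ => α, one_pos, fun t => hmin, by simp⟩
        · have hex : ∃ β ∈ RcPos r a c, ∃ γ ∈ RcPos r a c, α = β + γ := by
            by_contra h
            exact hmin ⟨hα, h⟩
          obtain ⟨β, hβ, γ, hγ, hsum⟩ := hex
          have hhβ := RcPos_height hdata c hc hβ
          have hhγ := RcPos_height hdata c hc hγ
          have hsplit : ∑ i, α i = ∑ i, β i + ∑ i, γ i := by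
            rw [hsum, ← Finset.sum_add_distrib]
            rfl
          have hβle : ∑ i, β i ≤ (n:ℤ) := by push_cast at hle ⊢; omega
          have hγle : ∑ i, γ i ≤ (n:ℤ) := by push_cast at hle ⊢; omega
          obtain ⟨k1, f1, hk1, hf1, he1⟩ := ih β hβ hβle
          obtain ⟨k2, f2, hk2, hf2, he2⟩ := ih γ hγ hγle
          refine ⟨k1 + k2, Fin.append f1 f2, by omega, fun t => ?_, ?_⟩
          · refine Fin.addCases (fun i => ?_) (fun i => ?_) t
            · rw [Fin.append_left]; exact hf1 i
            · rw [Fin.append_right]; exact hf2 i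
          · rw [Fin.sum_univ_add]
            simp only [Fin.append_left, Fin.append_right]
            rw [← he1, ← he2, hsum]
    intro α hα
    exact key (∑ i, α i).toNat α hα (Int.self_le_toNat _)
end
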